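/- Let ξ be a bounded continuous function on ℝⁿ. If there exist a constant K and s > n/2 such that |ξ(x)| ≤ K·‖x‖^{-s} for all sufficiently large ‖x‖, then ξ ∈ Ξ (i.e., ∑_{p ∈ ℤⁿ} |ξ(x-p)|² converges uniformly on compact sets to a continuous function and is uniformly bounded). -/

import Mathlib

open MeasureTheory Filter

noncomputable section

/-- The embedding of the integer lattice `ℤⁿ` into Euclidean `ℝⁿ`. -/
def lattE {n : ℕ} (p : Fin n → ℤ) : EuclideanSpace ℝ (Fin n) := WithLp.toLp 2 (fun i => (p i : ℝ))

lemma summable_int_one_add_abs_rpow {t : ℝ} (ht : 1 < t) :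
    Summable (fun m : ℤ => ((1:ℝ) + |(m:ℝ)|) ^ (-t)) := by
  have h := (Real.summable_one_div_int_add_rpow (1/2) t).mpr ht
  refine h.of_nonneg_of_le (fun m => Real.rpow_nonneg (by positivity) _) (fun m => ?_)
  have h1 : (0:ℝ) < |(m:ℝ) + 1/2| := by
    rcases le_or_gt 0 m with hm | hm
    · have : (0:ℝ) ≤ (m:ℝ) := by exact_mod_cast hm
      rw [abs_of_pos (by linarith)]; linarith
    · have hm' : m ≤ -1 := by omega
      have : (m:ℝ) ≤ -1 := by exact_mod_cast hm'
      rw [abs_of_neg (by linarith)]; linarith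
  have h2 : |(m:ℝ) + 1/2| ≤ 1 + |(m:ℝ)| := by
    calc |(m:ℝ) + 1/2| ≤ |(m:ℝ)| + |(1/2:ℝ)| := abs_add_le _ _
    _ ≤ 1 + |(m:ℝ)| := by rw [abs_of_pos (by norm_num : (0:ℝ) < 1/2)]; linarith
  calc ((1:ℝ) + |(m:ℝ)|) ^ (-t) ≤ |(m:ℝ) + 1/2| ^ (-t) :=
        Real.rpow_le_rpow_of_nonpos h1 h2 (by linarith)
    _ = 1 / |(m:ℝ) + 1/2| ^ t := by
        rw [Real.rpow_neg (abs_nonneg _)]; norm_num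

lemma summable_pi_int {n : ℕ} {f : ℤ → ℝ} (hf : Summable f) (h0 : ∀ m, 0 ≤ f m) :
    Summable (fun p : Fin n → ℤ => ∏ i, f (p i)) := by
  induction n with
  | zero =>
      haveI : Finite (Fin 0 → ℤ) := Finite.of_subsingleton
      exact Summable.of_finite
  | succ n ih =>
      have h := hf.mul_of_nonneg ih h0
        (fun p => Finset.prod_nonneg fun i _ => h0 _)
      rw [← (Fin.consEquiv (fun _ : Fin (n+1) => ℤ)).summable_iff]
      refine h.congr fun x => ?_
      simp [Fin.consEquiv, Function.comp, Fin.prod_univ_succ]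

lemma abs_coord_le_norm_lattE {n : ℕ} (p : Fin n → ℤ) (i : Fin n) :
    |(p i : ℝ)| ≤ ‖lattE p‖ := by
  rw [EuclideanSpace.norm_eq]
  have h1 : ‖lattE p i‖ ^ 2 ≤ ∑ j, ‖lattE p j‖ ^ 2 :=
    Finset.single_le_sum (f := fun j => ‖lattE p j‖ ^ 2) (fun j _ => sq_nonneg _)
      (Finset.mem_univ i)
  have := Real.sqrt_le_sqrt h1
  rw [Real.sqrt_sq_eq_abs, abs_norm] at this
  simpa [lattE, Real.norm_eq_abs] using this

lemma summable_one_add_norm_rpow {n : ℕ} {r : ℝ} (hr : (n:ℝ) < r) :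
    Summable (fun p : Fin n → ℤ => ((1:ℝ) + ‖lattE p‖) ^ (-r)) := by
  rcases Nat.eq_zero_or_pos n with hn | hn
  · subst hn
    haveI : Finite (Fin 0 → ℤ) := Finite.of_subsingleton
    exact Summable.of_finite
  have hn' : (0:ℝ) < n := by exact_mod_cast hn
  set t := r / n with ht_def
  have ht : 1 < t := (one_lt_div hn').mpr hr
  have hbase := summable_pi_int (n := n) (summable_int_one_add_abs_rpow ht)
    (fun m => Real.rpow_nonneg (by positivity) _)
  refine hbase.of_nonneg_of_le (fun p => Real.rpow_nonneg (by positivity) _) (fun p => ?_)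
  have hpos : (0:ℝ) < 1 + ‖lattE p‖ := by positivity
  have h2 : ∏ i, ((1:ℝ) + |(p i : ℝ)|) ≤ (1 + ‖lattE p‖) ^ (n : ℕ) := by
    have : ((1:ℝ) + ‖lattE p‖) ^ (n : ℕ) = ∏ _i : Fin n, ((1:ℝ) + ‖lattE p‖) := by
      rw [Finset.prod_const, Finset.card_univ, Fintype.card_fin]
    rw [this]
    exact Finset.prod_le_prod (fun i _ => by positivity)
      (fun i _ => by linarith [abs_coord_le_norm_lattE p i])
  have hprodpos : (0:ℝ) < ∏ i, ((1:ℝ) + |(p i : ℝ)|) :=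
    Finset.prod_pos fun i _ => by positivity
  calc ((1:ℝ) + ‖lattE p‖) ^ (-r)
      = (((1:ℝ) + ‖lattE p‖) ^ (n : ℕ)) ^ (-t) := by
        rw [← Real.rpow_natCast (1 + ‖lattE p‖) n, ← Real.rpow_mul hpos.le]
        congr 1
        rw [ht_def]
        field_simp
    _ ≤ (∏ i, ((1:ℝ) + |(p i : ℝ)|)) ^ (-t) :=
        Real.rpow_le_rpow_of_nonpos hprodpos h2 (by linarith)
    _ = ∏ i, ((1:ℝ) + |(p i : ℝ)|) ^ (-t) :=
        (Real.finset_prod_rpow _ _ (fun i _ => by positivity) _).symm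

lemma key_majorant {n : ℕ} (ξ : EuclideanSpace ℝ (Fin n) → ℂ)
    {M : ℝ} (hb : ∀ x, ‖ξ x‖ ≤ M)
    (K s R : ℝ) (hs : (n : ℝ) / 2 < s)
    (hdecay : ∀ x : EuclideanSpace ℝ (Fin n), R ≤ ‖x‖ → ‖ξ x‖ ≤ K * ‖x‖ ^ (-s))
    (ρ : ℝ) (hρ : 0 ≤ ρ) :
    ∃ u : (Fin n → ℤ) → ℝ, Summable u ∧
      ∀ p x, ‖x‖ ≤ ρ → ‖ξ (x - lattE p)‖ ^ 2 ≤ u p := by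
  have hM : 0 ≤ M := le_trans (norm_nonneg _) (hb 0)
  set K' := max K 0 with hK'
  set C := K' ^ 2 * (16:ℝ) ^ s with hC
  set T := 2 * ρ + 2 * |R| + 2 with hT
  have hTpos : 2 ≤ T := by rw [hT]; linarith [abs_nonneg R]
  set u : (Fin n → ℤ) → ℝ := fun p =>
    if ‖lattE p‖ < T then M ^ 2 else C * (1 + ‖lattE p‖) ^ (-(2 * s)) with hu
  have hs2 : (n : ℝ) < 2 * s := by linarith
  have hbase := summable_one_add_norm_rpow (n := n) hs2
  refine ⟨u, ?_, ?_⟩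
  · -- summability
    have hSfin : {p : Fin n → ℤ | ‖lattE p‖ < T}.Finite := by
      have : {p : Fin n → ℤ | ‖lattE p‖ < T} ⊆
          Set.pi Set.univ (fun _ : Fin n => Set.Icc (-⌈T⌉) ⌈T⌉) := by
        intro p hp i _
        have h1 : |(p i : ℝ)| ≤ T := (abs_coord_le_norm_lattE p i).trans (le_of_lt hp)
        have h2 : |(p i : ℝ)| ≤ (⌈T⌉ : ℝ) := h1.trans (Int.le_ceil T)
        have h3 : |p i| ≤ ⌈T⌉ := by exact_mod_cast h2
        exact Set.mem_Icc.mpr (abs_le.mp h3)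
      exact Set.Finite.subset (Set.Finite.pi fun _ => Set.finite_Icc _ _) this
    rw [← hSfin.summable_compl_iff]
    refine ((hbase.mul_left C).subtype _).congr fun q => ?_
    have hq : ¬ ‖lattE (q : Fin n → ℤ)‖ < T := q.2
    simp only [hu, Function.comp, if_neg hq]
  · intro p x hx
    by_cases hp : ‖lattE p‖ < T
    · simp only [hu, if_pos hp]
      exact pow_le_pow_left₀ (norm_nonneg _) (hb _) 2
    · simp only [hu, if_neg hp]
      push_neg at hp
      have hnp : (2:ℝ) ≤ ‖lattE p‖ := le_trans hTpos hp
      have hd : ‖lattE p‖ - ρ ≤ ‖x - lattE p‖ := by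
        have h1 : ‖lattE p‖ - ‖x‖ ≤ ‖lattE p - x‖ := norm_sub_norm_le _ _
        rw [norm_sub_rev] at h1
        linarith
      have hhalf : ‖lattE p‖ / 2 ≤ ‖x - lattE p‖ := by
        have : ρ ≤ ‖lattE p‖ / 2 := by
          rw [hT] at hp; linarith [abs_nonneg R]
        linarith
      have hR : R ≤ ‖x - lattE p‖ := by
        have : |R| ≤ ‖lattE p‖ / 2 := by rw [hT] at hp; linarith
        calc R ≤ |R| := le_abs_self R
          _ ≤ ‖lattE p‖ / 2 := this
          _ ≤ _ := hhalf
      set a := (1:ℝ) + ‖lattE p‖ with ha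
      have hapos : (0:ℝ) < a := by positivity
      have hquarter : a / 4 ≤ ‖x - lattE p‖ := by
        have : a / 4 ≤ ‖lattE p‖ / 2 := by rw [ha]; linarith
        linarith
      have hspos : 0 < s := lt_of_le_of_lt (by positivity) hs
      have hstep : ‖ξ (x - lattE p)‖ ≤ K' * ((4:ℝ) ^ s * a ^ (-s)) := by
        have h1 : ‖ξ (x - lattE p)‖ ≤ K * ‖x - lattE p‖ ^ (-s) := hdecay _ hR
        have h2 : K * ‖x - lattE p‖ ^ (-s) ≤ K' * ‖x - lattE p‖ ^ (-s) :=
          mul_le_mul_of_nonneg_right (le_max_left _ _) (Real.rpow_nonneg (norm_nonneg _) _)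
        have h3 : ‖x - lattE p‖ ^ (-s) ≤ (a / 4) ^ (-s) :=
          Real.rpow_le_rpow_of_nonpos (by positivity) hquarter (by linarith)
        have h4 : (a / 4) ^ (-s) = (4:ℝ) ^ s * a ^ (-s) := by
          rw [Real.div_rpow hapos.le (by norm_num : (0:ℝ) ≤ 4),
            Real.rpow_neg (by norm_num : (0:ℝ) ≤ 4), div_eq_mul_inv, inv_inv]
          ring
        calc ‖ξ (x - lattE p)‖ ≤ K' * ‖x - lattE p‖ ^ (-s) := h1.trans h2
          _ ≤ K' * ((4:ℝ) ^ s * a ^ (-s)) := by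
              rw [← h4]
              exact mul_le_mul_of_nonneg_left h3 (le_max_right K 0)
      have e1 : ((4:ℝ) ^ s) ^ 2 = (16:ℝ) ^ s := by
        rw [← Real.rpow_natCast ((4:ℝ) ^ s) 2, ← Real.rpow_mul (by norm_num : (0:ℝ) ≤ 4),
          show (16:ℝ) = (4:ℝ) ^ ((2:ℕ):ℝ) by rw [Real.rpow_natCast]; norm_num,
          ← Real.rpow_mul (by norm_num : (0:ℝ) ≤ 4)]
        congr 1
        push_cast
        ring
      have e2 : (a ^ (-s)) ^ 2 = a ^ (-(2 * s)) := by
        rw [← Real.rpow_natCast (a ^ (-s)) 2, ← Real.rpow_mul hapos.le]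
        congr 1
        push_cast
        ring
      have hsq : (K' * ((4:ℝ) ^ s * a ^ (-s))) ^ 2 = C * a ^ (-(2 * s)) := by
        rw [mul_pow, mul_pow, e1, e2, hC, mul_assoc]
      calc ‖ξ (x - lattE p)‖ ^ 2 ≤ (K' * ((4:ℝ) ^ s * a ^ (-s))) ^ 2 :=
            pow_le_pow_left₀ (norm_nonneg _) hstep 2
        _ = C * a ^ (-(2 * s)) := hsq

/-- The periodization of the square modulus of `ξ`. -/
def perSumE {n : ℕ} (ξ : EuclideanSpace ℝ (Fin n) → ℂ) (x : EuclideanSpace ℝ (Fin n)) : ℝ :=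
  ∑' p : Fin n → ℤ, ‖ξ (x - lattE p)‖ ^ 2

/-- Membership in the module `Ξ`. -/
def InXiE {n : ℕ} (ξ : EuclideanSpace ℝ (Fin n) → ℂ) : Prop :=
  Continuous ξ ∧ (∃ M, ∀ x, ‖ξ x‖ ≤ M) ∧
  (∀ x, Summable fun p : Fin n → ℤ => ‖ξ (x - lattE p)‖ ^ 2) ∧
  (∃ K, ∀ x, perSumE ξ x ≤ K) ∧ Continuous (perSumE ξ)

lemma lattE_add {n : ℕ} (q p : Fin n → ℤ) : lattE (q + p) = lattE q + lattE p := by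
  ext i
  simp [lattE, PiLp.add_apply]

lemma perSumE_periodic {n : ℕ} (ξ : EuclideanSpace ℝ (Fin n) → ℂ) (q : Fin n → ℤ)
    (x : EuclideanSpace ℝ (Fin n)) : perSumE ξ (x - lattE q) = perSumE ξ x := by
  unfold perSumE
  rw [← (Equiv.addLeft q).tsum_eq (fun p => ‖ξ (x - lattE p)‖ ^ 2)]
  refine tsum_congr fun p => ?_
  have : x - lattE q - lattE p = x - lattE (Equiv.addLeft q p) := by
    simp only [Equiv.coe_addLeft, lattE_add, sub_sub]
  rw [this]

/-- A bounded continuous function decaying like ‖x‖^{-s} with s > n/2 lies in Ξ. -/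
theorem stmt7 {n : ℕ} (ξ : EuclideanSpace ℝ (Fin n) → ℂ)
    (hc : Continuous ξ) (hb : ∃ M, ∀ x, ‖ξ x‖ ≤ M)
    (K s R : ℝ) (hs : (n : ℝ) / 2 < s)
    (hdecay : ∀ x : EuclideanSpace ℝ (Fin n), R ≤ ‖x‖ → ‖ξ x‖ ≤ K * ‖x‖ ^ (-s)) :
    InXiE ξ := by
  obtain ⟨M, hbM⟩ := hb
  have hsummx : ∀ x, Summable fun p : Fin n → ℤ => ‖ξ (x - lattE p)‖ ^ 2 := by
    intro x
    obtain ⟨u, hu, hle⟩ := key_majorant ξ hbM K s R hs hdecay ‖x‖ (norm_nonneg x)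
    exact hu.of_nonneg_of_le (fun p => by positivity) (fun p => hle p x le_rfl)
  refine ⟨hc, ⟨M, hbM⟩, hsummx, ?_, ?_⟩
  · -- uniform bound
    obtain ⟨u, hu, hle⟩ := key_majorant ξ hbM K s R hs hdecay
      (Real.sqrt n) (Real.sqrt_nonneg _)
    refine ⟨∑' p, u p, fun x => ?_⟩
    set q : Fin n → ℤ := fun i => ⌊x i⌋ with hq
    have hy : ‖x - lattE q‖ ≤ Real.sqrt n := by
      rw [EuclideanSpace.norm_eq]
      apply Real.sqrt_le_sqrt
      calc ∑ i, ‖(x - lattE q) i‖ ^ 2 ≤ ∑ _i : Fin n, (1:ℝ) := by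
            refine Finset.sum_le_sum fun i _ => ?_
            have h1 : (x - lattE q) i = x i - (⌊x i⌋ : ℝ) := by
              rw [PiLp.sub_apply]; simp [lattE, hq]
            rw [h1, Real.norm_eq_abs]
            refine pow_le_one₀ (abs_nonneg _) ?_
            rw [abs_of_nonneg (by linarith [Int.floor_le (x i)])]
            linarith [Int.lt_floor_add_one (x i)]
        _ = (n : ℝ) := by simp
    rw [← perSumE_periodic ξ q x]
    exact Summable.tsum_le_tsum (fun p => hle p _ hy) (hsummx _) hu
  · -- continuity
    rw [continuous_iff_continuousAt]
    intro x₀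
    obtain ⟨u, hu, hle⟩ := key_majorant ξ hbM K s R hs hdecay (‖x₀‖ + 1) (by positivity)
    have hco : ContinuousOn (fun x => ∑' p : Fin n → ℤ, ‖ξ (x - lattE p)‖ ^ 2)
        (Metric.ball x₀ 1) := by
      refine continuousOn_tsum
        (fun p => ((hc.comp (continuous_id.sub continuous_const)).norm.pow 2).continuousOn)
        hu (fun p x hx => ?_)
      rw [Real.norm_eq_abs, abs_of_nonneg (by positivity)]
      apply hle
      have h1 : ‖x - x₀‖ < 1 := mem_ball_iff_norm.mp hx
      have h2 : ‖x‖ - ‖x₀‖ ≤ ‖x - x₀‖ := norm_sub_norm_le _ _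
      linarith
    exact hco.continuousAt (Metric.ball_mem_nhds x₀ one_pos)
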